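/- arXiv:1212.5726 — 9 statements merged into one kernel-verified Lean document; each statement's English description precedes it below -/
import Mathlib

section
/- For a topological space X, the following are equivalent: (1) for every pair of pointwise discontinuous functions f : X → ℝ and g : X → ℝ, the set C(f) ∩ C(g) is dense in X; (2) for every pair G, H of dense Gδ subsets of X, the set G ∩ H is dense in X. -/
open Set Filter

/-- Given a countable family of open sets whose intersection is dense, there is a real-valued
function whose set of continuity points is exactly that intersection. -/
lemma exists_fun_continuousAt_eq {X : Type*} [TopologicalSpace X] (U : ℕ → Set X)
    (hU : ∀ n, IsOpen (U n)) (hd : Dense (⋂ n, U n)) :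
    ∃ f : X → ℝ, {x | ContinuousAt f x} = ⋂ n, U n := by
  classical
  set G := ⋂ n, U n with hG
  set f : X → ℝ := fun x =>
    if h : ∀ n, x ∈ U n then 0 else (2 : ℝ)⁻¹ ^ Nat.find (not_forall.mp h) with hf
  have hfG : ∀ x, (∀ n, x ∈ U n) → f x = 0 := by
    intro x hx; simp [hf, hx]
  refine ⟨f, Set.ext fun x => ?_⟩
  simp only [mem_setOf_eq, hG, mem_iInter]
  constructor
  · -- continuity point ⇒ x ∈ G
    intro hc
    by_contra hxn
    push_neg at hxn
    obtain ⟨m, hm⟩ := hxn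
    have hxn' : ¬ ∀ n, x ∈ U n := fun h => hm (h m)
    have hfx : f x = (2 : ℝ)⁻¹ ^ Nat.find (not_forall.mp hxn') := by simp [hf, hxn']
    have hpos : 0 < f x := by rw [hfx]; positivity
    have hev : {y | dist (f y) (f x) < f x} ∈ nhds x :=
      hc (Metric.ball_mem_nhds _ hpos)
    obtain ⟨y, hy1, hy2⟩ := mem_closure_iff_nhds.mp (hd x) _ hev
    rw [hG, mem_iInter] at hy2
    have hy0 : f y = 0 := hfG y hy2
    rw [mem_setOf_eq, hy0, dist_zero_left, Real.norm_eq_abs, abs_of_pos hpos] at hy1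
    exact lt_irrefl _ hy1
  · -- x ∈ G ⇒ continuity point
    intro hx
    have hfx : f x = 0 := hfG x hx
    rw [ContinuousAt, hfx, Metric.tendsto_nhds]
    intro ε hε
    obtain ⟨n, hn⟩ := exists_pow_lt_of_lt_one hε (by norm_num : (2:ℝ)⁻¹ < 1)
    have hVopen : IsOpen (⋂ k ∈ Finset.range (n + 1), U k) :=
      isOpen_biInter_finset fun k _ => hU k
    have hxV : x ∈ ⋂ k ∈ Finset.range (n + 1), U k := by
      simp only [mem_iInter]; exact fun k _ => hx k
    filter_upwards [hVopen.mem_nhds hxV] with y hy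
    simp only [mem_iInter, Finset.mem_range] at hy
    have hyb : dist (f y) 0 < ε := by
      rw [dist_zero_right]
      by_cases h : ∀ k, y ∈ U k
      · rw [hfG y h]; simpa using hε
      · have hfy : f y = (2 : ℝ)⁻¹ ^ Nat.find (not_forall.mp h) := by simp [hf, h]
        have hnk : n < Nat.find (not_forall.mp h) := by
          by_contra hle
          push_neg at hle
          exact Nat.find_spec (not_forall.mp h) (hy _ (Nat.lt_succ_of_le hle))
        rw [hfy, Real.norm_eq_abs, abs_of_nonneg (by positivity)]
        calc (2 : ℝ)⁻¹ ^ Nat.find (not_forall.mp h) ≤ (2:ℝ)⁻¹ ^ n :=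
              pow_le_pow_of_le_one (by norm_num) (by norm_num) hnk.le
          _ < ε := hn
    exact hyb

/-- Gauld–Piotrowski characterization of Volterra spaces: for a topological space `X`,
the pointwise-discontinuous-functions condition is equivalent to the dense-Gδ condition. -/
theorem volterra_characterization {X : Type*} [TopologicalSpace X] :
    (∀ f g : X → ℝ, Dense {x | ContinuousAt f x} → Dense {x | ContinuousAt g x} →
        Dense ({x | ContinuousAt f x} ∩ {x | ContinuousAt g x})) ↔
    (∀ G H : Set X, IsGδ G → Dense G → IsGδ H → Dense H → Dense (G ∩ H)) := by
  constructor
  · intro h G H hG hGd hH hHd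
    obtain ⟨U, hUo, rfl⟩ := hG.eq_iInter_nat
    obtain ⟨V, hVo, rfl⟩ := hH.eq_iInter_nat
    obtain ⟨f, hf⟩ := exists_fun_continuousAt_eq U hUo hGd
    obtain ⟨g, hg⟩ := exists_fun_continuousAt_eq V hVo hHd
    have := h f g (hf ▸ hGd) (hg ▸ hHd)
    rwa [hf, hg] at this
  · intro h f g hf hg
    exact h _ _ (IsGδ.setOf_continuousAt f) hf (IsGδ.setOf_continuousAt g) hg
end

section
/- Every almost P-space is Volterra: if X is a topological space in which every non-empty Gδ subset has non-empty interior, then for every pair G, H of dense Gδ subsets of X, the set G ∩ H is dense in X. -/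
/-- Every almost P-space is Volterra. -/
theorem almostPSpace_volterra {X : Type*} [TopologicalSpace X]
    (hAP : ∀ s : Set X, IsGδ s → s.Nonempty → (interior s).Nonempty) :
    ∀ G H : Set X, IsGδ G → Dense G → IsGδ H → Dense H → Dense (G ∩ H) := by
  intro G H hG hGd hH hHd
  rw [dense_iff_inter_open]
  intro U hU hUne
  have h1 : (G ∩ U).Nonempty := by
    obtain ⟨x, hxU, hxG⟩ := hGd.inter_open_nonempty U hU hUne
    exact ⟨x, hxG, hxU⟩
  obtain ⟨x, hx⟩ := hAP (G ∩ U) (hG.inter hU.isGδ) h1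
  obtain ⟨y, hy1, hy2⟩ := hHd.inter_open_nonempty _ isOpen_interior ⟨x, hx⟩
  obtain ⟨hyG, hyU⟩ := interior_subset hy1
  exact ⟨y, hyU, hyG, hy2⟩
end

section
/- Every dense subspace of an almost P-space is an almost P-space: if X is a topological space in which every non-empty Gδ subset has non-empty interior, and D is a dense subset of X, then D with the subspace topology is an almost P-space. -/
/-- Every dense subspace of an almost P-space is an almost P-space. -/
theorem dense_subspace_almostPSpace {X : Type*} [TopologicalSpace X]
    (hAP : ∀ s : Set X, IsGδ s → s.Nonempty → (interior s).Nonempty)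
    (D : Set X) (hD : Dense D) :
    ∀ s : Set D, IsGδ s → s.Nonempty → (interior s).Nonempty := by
  intro s hs hne
  rw [isGδ_iff_eq_iInter_nat] at hs
  obtain ⟨f, hfo, rfl⟩ := hs
  -- choose open sets in X inducing f n
  choose U hUo hUf using fun n => isOpen_induced_iff.mp (hfo n)
  set T : Set X := ⋂ n, U n with hT
  have hTgδ : IsGδ T := IsGδ.iInter_of_isOpen hUo
  have hsub : (⋂ n, f n) = (Subtype.val : D → X) ⁻¹' T := by
    simp only [hT, Set.preimage_iInter]
    exact Set.iInter_congr fun n => (hUf n).symm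
  have hTne : T.Nonempty := by
    obtain ⟨x, hx⟩ := hne
    exact ⟨x, Set.mem_preimage.mp (hsub ▸ hx)⟩
  obtain ⟨y, hy⟩ := hAP T hTgδ hTne
  obtain ⟨d, hdD, hdint⟩ := hD.exists_mem_open isOpen_interior ⟨y, hy⟩
  refine ⟨⟨d, hdD⟩, ?_⟩
  have hopen : IsOpen ((Subtype.val : D → X) ⁻¹' interior T) :=
    isOpen_interior.preimage continuous_subtype_val
  have hsubset : (Subtype.val : D → X) ⁻¹' interior T ⊆ ⋂ n, f n := by
    rw [hsub]; exact Set.preimage_mono interior_subset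
  exact interior_mono hsubset (hopen.subset_interior_iff.mpr Set.Subset.rfl hdint)
end

section
/- Every almost P-space is dense-hereditarily Volterra and open-hereditarily Volterra: if X is a topological space in which every non-empty Gδ subset has non-empty interior, then every dense subspace of X and every open subspace of X (with the subspace topology) is Volterra. -/
open Set

/-- A Gδ set in a subspace is the preimage of a Gδ set in the ambient space. -/
lemma gdelta_lift_aux {X : Type*} [TopologicalSpace X] {S : Set X} {G : Set S}
    (hG : IsGδ G) : ∃ A : Set X, IsGδ A ∧ G = Subtype.val ⁻¹' A := by
  obtain ⟨f, hf, rfl⟩ := hG.eq_iInter_nat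
  choose u hu hfu using fun n => isOpen_induced_iff.1 (hf n)
  refine ⟨⋂ n, u n, .iInter_of_isOpen hu, ?_⟩
  simp only [preimage_iInter, hfu]

/-- Abstract step lemma: if the "interior step" property holds for a subset `S`,
then the subspace `S` is Volterra. -/
lemma volterra_of_step {X : Type*} [TopologicalSpace X] {S : Set X}
    (hstep : ∀ A : Set X, IsGδ A → ∀ W : Set X, IsOpen W → (W ∩ S ∩ A).Nonempty →
      (W ∩ interior A ∩ S).Nonempty) :
    ∀ G H : Set S, IsGδ G → Dense G → IsGδ H → Dense H → Dense (G ∩ H) := by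
  intro G H hG hGd hH hHd
  obtain ⟨A, hA, rfl⟩ := gdelta_lift_aux hG
  obtain ⟨B, hB, rfl⟩ := gdelta_lift_aux hH
  rw [Subtype.dense_iff] at hGd hHd ⊢
  rw [Subtype.image_preimage_coe] at hGd hHd
  rw [← preimage_inter, Subtype.image_preimage_coe]
  intro x hxS
  rw [mem_closure_iff]
  intro V hV hxV
  -- V meets S ∩ A
  have h1 : (V ∩ S ∩ A).Nonempty := by
    have hx : x ∈ closure (S ∩ A) := hGd hxS
    obtain ⟨y, hy⟩ := mem_closure_iff.1 hx V hV hxV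
    exact ⟨y, ⟨hy.1, hy.2.1⟩, hy.2.2⟩
  -- step: V ∩ interior A meets S
  obtain ⟨y, hy⟩ := hstep A hA V hV h1
  -- y ∈ S, so y ∈ closure (S ∩ B); V ∩ interior A is open nbhd of y
  have hy' : y ∈ closure (S ∩ B) := hHd hy.2
  obtain ⟨z, hz⟩ := mem_closure_iff.1 hy' (V ∩ interior A) (hV.inter isOpen_interior)
    ⟨hy.1.1, hy.1.2⟩
  exact ⟨z, hz.1.1, hz.2.1, interior_subset hz.1.2, hz.2.2⟩

/-- Every almost P-space is dense-hereditarily Volterra and open-hereditarily Volterra. -/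
theorem almostPSpace_dense_open_hereditarily_volterra {X : Type*} [TopologicalSpace X]
    (hAP : ∀ s : Set X, IsGδ s → s.Nonempty → (interior s).Nonempty) :
    (∀ D : Set X, Dense D →
      ∀ G H : Set D, IsGδ G → Dense G → IsGδ H → Dense H → Dense (G ∩ H)) ∧
    (∀ U : Set X, IsOpen U →
      ∀ G H : Set U, IsGδ G → Dense G → IsGδ H → Dense H → Dense (G ∩ H)) := by
  have key : ∀ A : Set X, IsGδ A → ∀ V : Set X, IsOpen V → (V ∩ A).Nonempty →
      (V ∩ interior A).Nonempty := by
    intro A hA V hV hne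
    obtain ⟨x, hx⟩ := hAP (V ∩ A) (hV.isGδ.inter hA) hne
    rw [interior_inter, hV.interior_eq] at hx
    exact ⟨x, hx⟩
  constructor
  · intro D hD
    refine volterra_of_step fun A hA W hW hne => ?_
    obtain ⟨y, hy⟩ := key A hA W hW ⟨hne.choose, hne.choose_spec.1.1, hne.choose_spec.2⟩
    obtain ⟨z, hz⟩ := hD.inter_open_nonempty (W ∩ interior A) (hW.inter isOpen_interior) ⟨y, hy⟩
    exact ⟨z, hz.1, hz.2⟩
  · intro U hU
    refine volterra_of_step fun A hA W hW hne => ?_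
    obtain ⟨y, hy⟩ := key A hA (W ∩ U) (hW.inter hU)
      ⟨hne.choose, ⟨hne.choose_spec.1.1, hne.choose_spec.1.2⟩, hne.choose_spec.2⟩
    exact ⟨y, ⟨hy.1.1, hy.2⟩, hy.1.2⟩
end

section
/- Suppose 𝒰 is a point-finite collection of open subsets of a topological space X (i.e., every point of X belongs to only finitely many members of 𝒰), and for each U ∈ 𝒰 a Gδ set G(U) ⊆ U is given. Then the union ⋃{G(U) : U ∈ 𝒰} is a Gδ set in X. -/
/-- Gruenhage–Lutzer lemma: if `𝒰` is a point-finite collection of open subsets of `X`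
and each `U ∈ 𝒰` contains a Gδ set `G U`, then `⋃ U ∈ 𝒰, G U` is a Gδ set. -/
theorem pointFinite_union_gdelta {X : Type*} [TopologicalSpace X]
    (𝒰 : Set (Set X)) (hopen : ∀ U ∈ 𝒰, IsOpen U)
    (hpf : ∀ x : X, {U ∈ 𝒰 | x ∈ U}.Finite)
    (G : Set X → Set X) (hGδ : ∀ U ∈ 𝒰, IsGδ (G U)) (hsub : ∀ U ∈ 𝒰, G U ⊆ U) :
    IsGδ (⋃ U ∈ 𝒰, G U) := by
  classical
  -- choose open sequences for each G U
  have hchoice : ∀ U, ∃ f : ℕ → Set X, U ∈ 𝒰 → (∀ n, IsOpen (f n)) ∧ G U = ⋂ n, f n := by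
    intro U
    by_cases hU : U ∈ 𝒰
    · obtain ⟨f, hf1, hf2⟩ := isGδ_iff_eq_iInter_nat.1 (hGδ U hU)
      exact ⟨f, fun _ => ⟨hf1, hf2⟩⟩
    · exact ⟨fun _ => ∅, fun h => absurd h hU⟩
  choose f hf using hchoice
  -- B U n : open, decreasing, ⊆ U, with ⋂ n, B U n = G U
  set B : Set X → ℕ → Set X := fun U n => U ∩ ⋂ k ∈ Finset.range (n + 1), f U k with hB
  have hBopen : ∀ U ∈ 𝒰, ∀ n, IsOpen (B U n) := fun U hU n =>
    (hopen U hU).inter (isOpen_biInter_finset fun k _ => (hf U hU).1 k)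
  have hBanti : ∀ U, ∀ {m n : ℕ}, m ≤ n → B U n ⊆ B U m := by
    intro U m n hmn
    rintro x ⟨hxU, hxI⟩
    exact ⟨hxU, Set.mem_iInter₂.2 fun k hk => Set.mem_iInter₂.1 hxI k
      (Finset.mem_range.2 (lt_of_lt_of_le (Finset.mem_range.1 hk) (by omega)))⟩
  have hBG : ∀ U ∈ 𝒰, (⋂ n, B U n) = G U := by
    intro U hU
    apply Set.Subset.antisymm
    · intro x hx
      rw [(hf U hU).2]
      refine Set.mem_iInter.2 fun n => ?_
      have := Set.mem_iInter.1 hx n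
      exact Set.mem_iInter₂.1 this.2 n (Finset.self_mem_range_succ n)
    · intro x hx
      refine Set.mem_iInter.2 fun n => ⟨hsub U hU hx, Set.mem_iInter₂.2 fun k _ => ?_⟩
      have := (hf U hU).2 ▸ hx
      exact Set.mem_iInter.1 this k
  -- the key identity
  have key : (⋃ U ∈ 𝒰, G U) = ⋂ n, ⋃ U ∈ 𝒰, B U n := by
    apply Set.Subset.antisymm
    · intro x hx
      obtain ⟨U, hU, hxG⟩ := Set.mem_iUnion₂.1 hx
      refine Set.mem_iInter.2 fun n => Set.mem_iUnion₂.2 ⟨U, hU, ?_⟩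
      have := hBG U hU ▸ hxG
      exact Set.mem_iInter.1 this n
    · intro x hx
      -- for each n choose Uₙ with x ∈ B Uₙ n
      have hsel : ∀ n : ℕ, ∃ U, U ∈ 𝒰 ∧ x ∈ B U n := by
        intro n
        obtain ⟨U, hU, hxB⟩ := Set.mem_iUnion₂.1 (Set.mem_iInter.1 hx n)
        exact ⟨U, hU, hxB⟩
      choose u hu hxu using hsel
      have hmem : ∀ n, u n ∈ {U ∈ 𝒰 | x ∈ U} := fun n => ⟨hu n, (hxu n).1⟩
      have : Finite {U ∈ 𝒰 | x ∈ U} := (hpf x).to_subtype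
      obtain ⟨⟨U, hUmem⟩, hfib⟩ :=
        Finite.exists_infinite_fiber (fun n : ℕ => (⟨u n, hmem n⟩ : {U ∈ 𝒰 | x ∈ U}))
      have hUU : U ∈ 𝒰 := hUmem.1
      refine Set.mem_iUnion₂.2 ⟨U, hUU, ?_⟩
      rw [← hBG U hUU]
      refine Set.mem_iInter.2 fun n => ?_
      have hinf : {m : ℕ | u m = U}.Infinite := by
        have : (fun n : ℕ => (⟨u n, hmem n⟩ : {U ∈ 𝒰 | x ∈ U})) ⁻¹' {⟨U, hUmem⟩} =
            {m : ℕ | u m = U} := by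
          ext m; simp [Subtype.ext_iff]
        rwa [Set.infinite_coe_iff, this] at hfib
      obtain ⟨m, hmU, hnm⟩ := hinf.exists_gt n
      exact hBanti U hnm.le (hmU ▸ hxu m)
  rw [key]
  exact .iInter_of_isOpen fun n => isOpen_biUnion fun U hU => hBopen U hU n
end

section
/- If X is a T1 P-space and Y is a weak P-space, then the product X × Y is a weak P-space, i.e., every countable subset of X × Y is closed. -/
/-- If `X` is a T1 P-space and `Y` is a weak P-space, then `X × Y` is a weak P-space. -/
theorem prod_pSpace_weakPSpace {X Y : Type*} [TopologicalSpace X] [T1Space X]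
    [TopologicalSpace Y]
    (hP : ∀ s : Set X, IsGδ s → IsOpen s)
    (hY : ∀ s : Set Y, s.Countable → IsClosed s) :
    ∀ s : Set (X × Y), s.Countable → IsClosed s := by
  -- First: every countable subset of X is closed.
  have hX : ∀ t : Set X, t.Countable → IsClosed t := by
    intro t ht
    rw [← isOpen_compl_iff]
    have : tᶜ = ⋂ x ∈ t, ({x} : Set X)ᶜ := by
      ext z; simp; exact ⟨fun h i hi hz => h (hz ▸ hi), fun h hz => h z hz rfl⟩
    rw [this]
    exact hP _ (IsGδ.biInter ht fun x _ => (isOpen_compl_singleton (x := x)).isGδ)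
  intro s hs
  rw [← isOpen_compl_iff, isOpen_iff_forall_mem_open]
  rintro ⟨a, b⟩ hab
  set A : Set X := (Prod.fst '' s) \ {a} with hA
  set B : Set Y := {y | (a, y) ∈ s} with hB
  have hAc : A.Countable := ((hs.image _).mono Set.diff_subset)
  have hBc : B.Countable := by
    have : B ⊆ Prod.snd '' s := fun y hy => ⟨(a, y), hy, rfl⟩
    exact (hs.image _).mono this
  refine ⟨Aᶜ ×ˢ Bᶜ, ?_, ((hX A hAc).isOpen_compl).prod ((hY B hBc).isOpen_compl), ?_, ?_⟩
  · rintro ⟨x, y⟩ ⟨hx, hy⟩ hxy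
    have hxa : x = a := by
      by_contra h
      exact hx ⟨⟨(x, y), hxy, rfl⟩, h⟩
    exact hy (by rw [hB]; simpa [hxa] using hxy)
  · exact fun h => h.2 rfl
  · exact fun h => hab h
end

section
/- Let X = {f ∈ 2^{ω₁} : |f⁻¹(1)| ≤ ℵ₀} be the set of all functions from ω₁ to {0,1} with countable support. For every partial function σ from a countable subset of ω₁ to {0,1}, let [σ] = {f ∈ X : σ ⊆ f}, and for every n < ω let Xₙ = {f ∈ X : |f⁻¹(1)| = n}. Equip X with the topology generated by the subbase {[σ] \ Xₙ : σ a countable partial function, n < ω}. Then X is a weak P-space: every countable subset of X is closed. -/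
open Set TopologicalSpace

/-- The underlying set: functions from `I` to `Bool` with countable support. -/
def SpadaroX (I : Type*) : Type _ := {f : I → Bool // {i | f i = true}.Countable}

/-- `[σ]`: the set of members of `X` extending the partial function `σ`
(a partial function is coded as a map `I → Option Bool`). -/
def cylX {I : Type*} (σ : I → Option Bool) : Set (SpadaroX I) :=
  {f | ∀ i b, σ i = some b → f.1 i = b}

/-- `Xₙ`: the set of members of `X` whose support has exactly `n` elements. -/
def XnX {I : Type*} (n : ℕ) : Set (SpadaroX I) :=
  {f | {i | f.1 i = true}.encard = (n : ℕ∞)}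

/-- The subbase `{[σ] \ Xₙ : σ a countable partial function, n < ω}`. -/
def spadaroSubbase (I : Type*) : Set (Set (SpadaroX I)) :=
  {s | ∃ (σ : I → Option Bool) (n : ℕ),
    {i | σ i ≠ none}.Countable ∧ s = cylX σ \ XnX n}

instance spadaroTop (I : Type*) : TopologicalSpace (SpadaroX I) :=
  generateFrom (spadaroSubbase I)

theorem spadaro_weakPSpace (I : Type*) (hI : Cardinal.mk I = Cardinal.aleph 1) :
    ∀ s : Set (SpadaroX I), s.Countable → IsClosed s := by
  classical
  intro s hs
  rw [← isOpen_compl_iff, isOpen_iff_forall_mem_open]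
  intro f hf
  set D : Set I := {i | f.1 i = true} ∪ ⋃ g ∈ s, {i | g.1 i = true} with hD
  have hDc : D.Countable := f.2.union (hs.biUnion fun g _ => g.2)
  set σ : I → Option Bool := fun i => if i ∈ D then some (f.1 i) else none with hσ
  obtain ⟨n, hn⟩ : ∃ n : ℕ, {i | f.1 i = true}.encard ≠ (n : ℕ∞) := by
    by_cases hfin : {i | f.1 i = true}.Finite
    · refine ⟨hfin.toFinset.card + 1, ?_⟩
      rw [hfin.encard_eq_coe_toFinset_card]
      intro h
      have := (Nat.cast_injective (R := ℕ∞)) h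
      omega
    · exact ⟨0, by rw [Set.Infinite.encard_eq hfin]; simp⟩
  refine ⟨cylX σ \ XnX n, ?_, ?_, ?_, ?_⟩
  · -- subset of sᶜ
    rintro g ⟨hg, -⟩ hgs
    apply hf
    have hgf : g = f := by
      apply Subtype.ext
      funext i
      by_cases hi : i ∈ D
      · exact hg i _ (by simp [hσ, hi])
      · have hfi : f.1 i = false := by
          by_contra h
          exact hi (Or.inl (by simpa using h))
        have hgi : g.1 i = false := by
          by_contra h
          exact hi (Or.inr (mem_biUnion hgs (by simpa using h)))
        rw [hfi, hgi]
    rwa [← hgf]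
  · -- open
    exact GenerateOpen.basic _ ⟨σ, n, hDc.mono (fun i hi => by
      by_contra h; exact hi (by simp [hσ, h])), rfl⟩
  · -- f ∈ cylX σ
    intro i b hib
    by_cases hi : i ∈ D
    · simpa [hσ, hi] using hib
    · simp [hσ, hi] at hib
  · -- f ∉ XnX n
    exact hn
end

section
/- Let X = {f ∈ 2^{ω₁} : |f⁻¹(1)| ≤ ℵ₀} be the set of all functions from ω₁ to {0,1} with countable support. For every partial function σ from a countable subset of ω₁ to {0,1}, let [σ] = {f ∈ X : σ ⊆ f}, and for every n < ω let Xₙ = {f ∈ X : |f⁻¹(1)| = n}. Equip X with the topology generated by the subbase {[σ] \ Xₙ : σ a countable partial function, n < ω}. Then X is an almost P-space: every non-empty Gδ subset of X has non-empty interior. -/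
open Set TopologicalSpace

lemma spadaro_key {I : Type*} (U : Set (SpadaroX I)) (hU : IsOpen U) :
    ∀ f ∈ U, ∃ D : Set I, D.Countable ∧
      ∀ g : SpadaroX I, (∀ i ∈ D, g.1 i = f.1 i) → {i | g.1 i = true}.Infinite → g ∈ U := by
  have hU' : GenerateOpen (spadaroSubbase I) U := hU
  induction hU' with
  | basic t ht =>
    obtain ⟨σ, n, hσ, rfl⟩ := ht
    intro f hf
    refine ⟨{i | σ i ≠ none}, hσ, fun g hg hginf => ⟨?_, ?_⟩⟩
    · intro i b hib
      rw [hg i (by simp [hib])]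
      exact hf.1 i b hib
    · intro hmem
      have h2 : {i | g.1 i = true}.encard = (n : ℕ∞) := hmem
      rw [hginf.encard_eq] at h2
      simp at h2
  | univ => exact fun f _ => ⟨∅, countable_empty, fun g _ _ => trivial⟩
  | inter u v hu hv ihu ihv =>
    intro f hf
    obtain ⟨D₁, h₁, H₁⟩ := ihu hu f hf.1
    obtain ⟨D₂, h₂, H₂⟩ := ihv hv f hf.2
    exact ⟨D₁ ∪ D₂, h₁.union h₂, fun g hg hginf =>
      ⟨H₁ g (fun i hi => hg i (Or.inl hi)) hginf, H₂ g (fun i hi => hg i (Or.inr hi)) hginf⟩⟩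
  | sUnion S hS ih =>
    intro f hf
    obtain ⟨t, htS, hft⟩ := hf
    obtain ⟨D, hD, H⟩ := ih t htS (hS t htS) f hft
    exact ⟨D, hD, fun g hg hi => ⟨t, htS, H g hg hi⟩⟩

/-- The space `X` is an almost P-space: every non-empty Gδ set has non-empty interior. -/
theorem spadaro_almostPSpace (I : Type*) (hI : Cardinal.mk I = Cardinal.aleph 1) :
    ∀ s : Set (SpadaroX I), IsGδ s → s.Nonempty → (interior s).Nonempty := by
  classical
  intro s hs ⟨f, hf⟩
  obtain ⟨T, hTopen, hTcount, rfl⟩ := hs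
  -- for each t ∈ T choose a countable controlling set
  choose! D hDc hDgood using fun t (ht : t ∈ T) => spadaro_key t (hTopen t ht) f (hf t ht)
  set Dall : Set I := ⋃ t ∈ T, D t with hDall
  have hDallc : Dall.Countable := Countable.biUnion hTcount (fun t ht => hDc t ht)
  -- I is uncountable
  have hIuc : ¬ Countable I := by
    intro h
    have : Cardinal.mk I ≤ Cardinal.aleph0 := Cardinal.mk_le_aleph0
    rw [hI] at this
    exact absurd this (not_le.2 (by simpa using Cardinal.aleph0_lt_aleph_one))
  have hcomp : Dallᶜ.Infinite := by
    intro hfin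
    apply hIuc
    rw [← Set.countable_univ_iff]
    have : (univ : Set I) = Dall ∪ Dallᶜ := (Set.union_compl_self Dall).symm
    rw [this]
    exact hDallc.union hfin.countable
  obtain ⟨e⟩ : Nonempty (ℕ ↪ ↥(Dallᶜ)) := ⟨hcomp.natEmbedding⟩
  set E : Set I := Set.range (fun n => (e n : I)) with hE
  have hEc : E.Countable := Set.countable_range _
  have hEsub : E ⊆ Dallᶜ := by rintro _ ⟨n, rfl⟩; exact (e n).2
  have hEinf : E.Infinite :=
    Set.infinite_range_of_injective (Subtype.val_injective.comp e.injective)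
  -- the partial function σ
  set σ : I → Option Bool := fun i =>
    if i ∈ Dall then some (f.1 i) else if i ∈ E then some true else none with hσ
  have hσdom : {i | σ i ≠ none}.Countable := by
    apply (hDallc.union hEc).mono
    intro i hi
    simp only [mem_setOf_eq, hσ] at hi
    by_cases h1 : i ∈ Dall
    · exact Or.inl h1
    · by_cases h2 : i ∈ E
      · exact Or.inr h2
      · simp [h1, h2] at hi
  -- any member of cylX σ has infinite support and agrees with f on Dall
  have hcyl_inf : ∀ g : SpadaroX I, g ∈ cylX σ → {i | g.1 i = true}.Infinite := by
    intro g hg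
    apply Set.Infinite.mono _ hEinf
    intro i hi
    have hiD : i ∉ Dall := hEsub hi
    exact hg i true (by simp [hσ, hiD, hi])
  have hcyl_agree : ∀ g : SpadaroX I, g ∈ cylX σ → ∀ i ∈ Dall, g.1 i = f.1 i := by
    intro g hg i hi
    exact hg i (f.1 i) (by simp [hσ, hi])
  -- the witness h
  have hh_supp : {i | (if i ∈ E then true else f.1 i) = true}.Countable := by
    apply (hEc.union f.2).mono
    intro i hi
    simp only [mem_setOf_eq] at hi
    by_cases h2 : i ∈ E
    · exact Or.inl h2
    · simp only [h2, if_false] at hi; exact Or.inr hi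
  set h : SpadaroX I := ⟨fun i => if i ∈ E then true else f.1 i, hh_supp⟩ with hhdef
  have hhcyl : h ∈ cylX σ := by
    intro i b hib
    by_cases h1 : i ∈ Dall
    · have hiE : i ∉ E := fun hiE => (hEsub hiE) h1
      simp only [hσ, h1, if_true] at hib
      simp [hhdef, hiE, ← Option.some_inj.1 hib]
    · by_cases h2 : i ∈ E
      · simp only [hσ, h1, if_false, h2, if_true, Option.some_inj] at hib
        simp [hhdef, h2, ← hib]
      · simp [hσ, h1, h2] at hib
  -- the open set
  refine ⟨h, mem_interior.2 ⟨cylX σ \ XnX 0, ?_, ?_, ?_, ?_⟩⟩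
  · -- subset of ⋂₀ T
    rintro g ⟨hgc, -⟩ t htT
    exact hDgood t htT g
      (fun i hi => hcyl_agree g hgc i (Set.mem_biUnion htT hi)) (hcyl_inf g hgc)
  · exact GenerateOpen.basic _ ⟨σ, 0, hσdom, rfl⟩
  · exact hhcyl
  · intro hmem
    have h2 : {i | h.1 i = true}.encard = ((0 : ℕ) : ℕ∞) := hmem
    rw [(hcyl_inf h hhcyl).encard_eq] at h2
    simp at h2
end

section
/- Let X = {f ∈ 2^{ω₁} : |f⁻¹(1)| ≤ ℵ₀} be the set of all functions from ω₁ to {0,1} with countable support. For every partial function σ from a countable subset of ω₁ to {0,1}, let [σ] = {f ∈ X : σ ⊆ f}, and for every n < ω let Xₙ = {f ∈ X : |f⁻¹(1)| = n}. Equip X with the topology generated by the subbase {[σ] \ Xₙ : σ a countable partial function, n < ω}. Then X is not regular: the set X₁ is closed in X, the constant zero function 0 does not belong to X₁, and there do not exist disjoint open sets U, V in X with 0 ∈ U and X₁ ⊆ V. -/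
open Set TopologicalSpace

/-- The constant zero function as an element of `X`. -/
def spadaroZero (I : Type*) : SpadaroX I :=
  ⟨fun _ => false, by simp⟩

/-- Every open neighborhood of `g` contains a "basic" neighborhood described by a
countable set of coordinates and a finite set of forbidden support sizes. -/
lemma spadaro_exists_nbhd {I : Type*} {W : Set (SpadaroX I)} (hW : IsOpen W)
    {g : SpadaroX I} (hg : g ∈ W) :
    ∃ (D : Set I) (F : Set ℕ), D.Countable ∧ F.Finite ∧
      (∀ n ∈ F, g ∉ XnX n) ∧
      ∀ f : SpadaroX I, (∀ i ∈ D, f.1 i = g.1 i) → (∀ n ∈ F, f ∉ XnX n) → f ∈ W := by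
  have hb := isTopologicalBasis_of_subbasis (s := spadaroSubbase I)
    (t := spadaroTop I) rfl
  obtain ⟨B, hB, hgB, hBW⟩ := hb.exists_subset_of_mem_open hg hW
  obtain ⟨t, ⟨htfin, htsub⟩, rfl⟩ := hB
  have hch : ∀ s ∈ t, ∃ (σ : I → Option Bool) (n : ℕ),
      {i | σ i ≠ none}.Countable ∧ s = cylX σ \ XnX n := fun s hs => htsub hs
  choose! σ n hcount hsEq using hch
  have hgmem : ∀ s ∈ t, g ∈ cylX (σ s) \ XnX (n s) := by
    intro s hs
    have := (Set.mem_sInter.mp hgB) s hs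
    rwa [hsEq s hs] at this
  refine ⟨⋃ s ∈ t, {i | σ s i ≠ none}, (fun s => n s) '' t, ?_, ?_, ?_, ?_⟩
  · exact htfin.countable.biUnion (fun s hs => hcount s hs)
  · exact htfin.image _
  · rintro _ ⟨s, hs, rfl⟩
    exact (hgmem s hs).2
  · intro f hfD hfF
    apply hBW
    rw [Set.mem_sInter]
    intro s hs
    rw [hsEq s hs]
    constructor
    · intro i b hib
      have hiD : i ∈ ⋃ s ∈ t, {i | σ s i ≠ none} :=
        Set.mem_biUnion hs (by simp [hib])
      rw [hfD i hiD, (hgmem s hs).1 i b hib]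
    · exact hfF (n s) ⟨s, hs, rfl⟩

/-- The complement of a countable set in a type of cardinality `ℵ₁` is infinite. -/
lemma spadaro_compl_infinite {I : Type*} (hI : Cardinal.mk I = Cardinal.aleph 1)
    {C : Set I} (hC : C.Countable) : Cᶜ.Infinite := by
  intro hfin
  have huniv : (Set.univ : Set I).Countable := by
    rw [← Set.union_compl_self C]
    exact hC.union hfin.countable
  have : Countable I := Set.countable_univ_iff.mp huniv
  have hle : Cardinal.mk I ≤ Cardinal.aleph0 := Cardinal.mk_le_aleph0
  rw [hI] at hle
  exact absurd hle (not_le.2 Cardinal.aleph0_lt_aleph_one)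

/-- The space `X` is not regular: `X₁` is closed, the zero function is not in `X₁`,
yet they cannot be separated by disjoint open sets. -/
theorem spadaro_not_regular (I : Type*) (hI : Cardinal.mk I = Cardinal.aleph 1) :
    IsClosed (XnX 1 : Set (SpadaroX I)) ∧
    spadaroZero I ∉ (XnX 1 : Set (SpadaroX I)) ∧
    ¬ ∃ U V : Set (SpadaroX I),
        IsOpen U ∧ IsOpen V ∧ spadaroZero I ∈ U ∧ XnX 1 ⊆ V ∧ Disjoint U V := by
  classical
  refine ⟨?_, ?_, ?_⟩
  · -- X₁ᶜ is subbasic open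
    rw [← isOpen_compl_iff]
    have hmem : (XnX 1 : Set (SpadaroX I))ᶜ ∈ spadaroSubbase I := by
      refine ⟨fun _ => none, 1, by simp, ?_⟩
      ext f
      simp [cylX]
    exact TopologicalSpace.isOpen_generateFrom_of_mem hmem
  · show ¬ (({i | (fun _ : I => false) i = true} : Set I).encard = ((1 : ℕ) : ℕ∞))
    simp [XnX, spadaroZero]
  · rintro ⟨U, V, hU, hV, h0U, hX1V, hdisj⟩
    obtain ⟨D₀, F₀, hD₀c, hF₀f, -, hU'⟩ := spadaro_exists_nbhd hU h0U
    -- pick α outside D₀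
    obtain ⟨α, hα⟩ := (spadaro_compl_infinite hI hD₀c).nonempty
    have hαD₀ : α ∉ D₀ := hα
    -- the characteristic function of {α}
    set g₁ : SpadaroX I :=
      ⟨fun i => if i = α then true else false, by
        apply Set.Countable.mono _ (Set.countable_singleton α)
        intro i hi
        simp only [Set.mem_setOf_eq] at hi
        by_cases h : i = α
        · simp [h]
        · simp [h] at hi⟩ with hg₁def
    have hg₁supp : {i | g₁.1 i = true} = {α} := by
      ext i
      simp only [hg₁def, Set.mem_setOf_eq, Set.mem_singleton_iff]
      by_cases h : i = α <;> simp [h]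
    have hg₁X1 : g₁ ∈ (XnX 1 : Set (SpadaroX I)) := by
      simp [XnX, hg₁supp]
    obtain ⟨D₁, F₁, hD₁c, hF₁f, -, hV'⟩ := spadaro_exists_nbhd hV (hX1V hg₁X1)
    -- bound on forbidden sizes
    obtain ⟨b, hb⟩ := (hF₀f.union hF₁f).bddAbove
    -- fresh points
    set C : Set I := D₀ ∪ D₁ ∪ {α} with hCdef
    have hCc : C.Countable := (hD₀c.union hD₁c).union (Set.countable_singleton α)
    obtain ⟨T', hT'sub, hT'card⟩ :=
      (spadaro_compl_infinite hI hCc).exists_subset_card_eq b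
    have hαT' : α ∉ (T' : Set I) := fun h => hT'sub h (by simp [hCdef])
    set T : Set I := insert α (T' : Set I) with hTdef
    have hTfin : T.Finite := (T'.finite_toSet).insert α
    set f : SpadaroX I := ⟨fun i => if i ∈ T then true else false, by
      apply Set.Countable.mono _ hTfin.countable
      intro i hi
      simp only [Set.mem_setOf_eq] at hi
      by_cases h : i ∈ T
      · exact h
      · simp [h] at hi⟩ with hfdef
    have hfsupp : {i | f.1 i = true} = T := by
      ext i
      simp only [hfdef, Set.mem_setOf_eq]
      by_cases h : i ∈ T <;> simp [h]
    have hTcard : T.encard = ((b + 1 : ℕ) : ℕ∞) := by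
      rw [hTdef, Set.encard_insert_of_notMem hαT',
        Set.encard_coe_eq_coe_finsetCard, hT'card]
      rfl
    have hfsize : ∀ n ∈ F₀ ∪ F₁, f ∉ XnX n := by
      intro n hn hmem
      have : n ≤ b := hb hn
      have heq : T.encard = ((n : ℕ) : ℕ∞) := by rw [← hfsupp]; exact hmem
      rw [hTcard, Nat.cast_inj] at heq
      omega
    have hfU : f ∈ U := by
      apply hU'
      · intro i hi
        have hiα : i ≠ α := fun h => hαD₀ (h ▸ hi)
        have hiT' : i ∉ (T' : Set I) := fun h => hT'sub h (by simp [hCdef, hi])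
        have : i ∉ T := by simp [hTdef, hiα, hiT']
        simp [hfdef, spadaroZero, this]
      · exact fun n hn => hfsize n (Set.mem_union_left _ hn)
    have hfV : f ∈ V := by
      apply hV'
      · intro i hi
        by_cases h : i = α
        · subst h
          simp [hfdef, hg₁def, hTdef]
        · have hiT' : i ∉ (T' : Set I) := fun h' => hT'sub h' (by simp [hCdef, hi])
          have : i ∉ T := by simp [hTdef, h, hiT']
          simp [hfdef, hg₁def, this, h]
      · exact fun n hn => hfsize n (Set.mem_union_right _ hn)
    exact Set.disjoint_left.mp hdisj hfU hfV
end
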